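/- Define γ : ℝ → ℝ^{4×2} by γ(t) = [[cos t, 0],[0,1],[sin t, 0],[0,0]]. Then: (i) γ(t)ᵀ·γ(t) = I₂ for all t ∈ ℝ (γ lies on the Stiefel manifold St(4,2)); (ii) γ is 2π-periodic, in particular γ(2π) = γ(0) = [I₂; 0]; (iii) ‖γ'(t)‖_F = 1 for all t ∈ ℝ, so the length of γ over [0, 2π] equals 2π; and (iv) γ coincides with the Euclidean Stiefel geodesic exp(tS)·[I₂; 0]·exp(−tA) for A = 0 and B = [[1,0],[0,0]], where S = [[2A, −Bᵀ],[B, 0]]. Hence there exists a closed unit-speed Euclidean Stiefel geodesic of length exactly 2π. -/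

import Mathlib

open Matrix Real

attribute [local instance] Matrix.frobeniusNormedAddCommGroup Matrix.frobeniusNormedSpace
attribute [local instance] Matrix.frobeniusNormedRing Matrix.frobeniusNormedAlgebra

/-- The rotation curve in `SO(4)` generating the geodesic. -/
noncomputable def StGG (t : ℝ) : Matrix (Fin 4) (Fin 4) ℝ :=
  !![Real.cos t, 0, -Real.sin t, 0; 0, 1, 0, 0; Real.sin t, 0, Real.cos t, 0; 0, 0, 0, 1]

theorem StGG_deriv (t : ℝ) : HasDerivAt StGG
    (!![-Real.sin t, 0, -Real.cos t, 0; 0, 0, 0, 0; Real.cos t, 0, -Real.sin t, 0; 0, 0, 0, 0]) t := by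
  have h : StGG = fun t => Real.cos t • (!![1,0,0,0;0,0,0,0;0,0,1,0;0,0,0,0] : Matrix (Fin 4) (Fin 4) ℝ)
      + Real.sin t • !![0,0,-1,0;0,0,0,0;1,0,0,0;0,0,0,0] + !![0,0,0,0;0,1,0,0;0,0,0,0;0,0,0,1] := by
    funext t; ext i j; fin_cases i <;> fin_cases j <;> simp [StGG, Matrix.vecHead, Matrix.vecTail]
  rw [h]
  have := (((Real.hasDerivAt_cos t).smul_const (!![(1:ℝ),0,0,0;0,0,0,0;0,0,1,0;0,0,0,0])).add
    ((Real.hasDerivAt_sin t).smul_const (!![(0:ℝ),0,-1,0;0,0,0,0;1,0,0,0;0,0,0,0]))).add_const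
    (!![(0:ℝ),0,0,0;0,1,0,0;0,0,0,0;0,0,0,1])
  refine this.congr_deriv ?_
  ext i j
  fin_cases i <;> fin_cases j <;> simp [Matrix.vecHead, Matrix.vecTail]

theorem S_StGG (t : ℝ) : (!![0,0,-1,0; 0,0,0,0; 1,0,0,0; 0,0,0,0] : Matrix (Fin 4) (Fin 4) ℝ) * StGG t
    = !![-Real.sin t, 0, -Real.cos t, 0; 0, 0, 0, 0; Real.cos t, 0, -Real.sin t, 0; 0, 0, 0, 0] := by
  ext i j
  fin_cases i <;> fin_cases j <;>
    simp [StGG, Matrix.mul_apply, Fin.sum_univ_succ, Matrix.vecHead, Matrix.vecTail]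

theorem StGG_zero : StGG 0 = 1 := by
  ext i j
  fin_cases i <;> fin_cases j <;>
    simp [StGG, Matrix.one_apply, Matrix.vecHead, Matrix.vecTail]

theorem st42_explicit_closed_geodesic
    (γ : ℝ → Matrix (Fin 4) (Fin 2) ℝ)
    (hγ : ∀ t : ℝ, γ t = !![Real.cos t, 0; 0, 1; Real.sin t, 0; 0, 0])
    (A B : Matrix (Fin 2) (Fin 2) ℝ) (hA : A = 0) (hB : B = !![1, 0; 0, 0])
    (S : Matrix (Fin 4) (Fin 4) ℝ)
    (hS : S = (Matrix.fromBlocks (2 • A) (-Bᵀ) B 0).submatrix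
      finSumFinEquiv.symm finSumFinEquiv.symm) :
    (∀ t : ℝ, (γ t)ᵀ * γ t = 1)
    ∧ (∀ t : ℝ, γ (t + 2 * π) = γ t)
    ∧ γ (2 * π) = γ 0
    ∧ γ 0 = !![1, 0; 0, 1; 0, 0; 0, 0]
    ∧ (∀ t : ℝ, ‖deriv γ t‖ = 1)
    ∧ (∫ t in (0 : ℝ)..(2 * π), ‖deriv γ t‖) = 2 * π
    ∧ (∀ t : ℝ, γ t =
        NormedSpace.exp (t • S) *
          ((Matrix.fromRows 1 0 : Matrix (Fin 2 ⊕ Fin 2) (Fin 2) ℝ).submatrix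
            finSumFinEquiv.symm id) *
          NormedSpace.exp ((-t) • A)) := by
  have e0 : (finSumFinEquiv : Fin 2 ⊕ Fin 2 ≃ Fin 4).symm (0 : Fin 4) = Sum.inl (0:Fin 2) := by decide
  have e1 : (finSumFinEquiv : Fin 2 ⊕ Fin 2 ≃ Fin 4).symm (1 : Fin 4) = Sum.inl (1:Fin 2) := by decide
  have e2 : (finSumFinEquiv : Fin 2 ⊕ Fin 2 ≃ Fin 4).symm (2 : Fin 4) = Sum.inr (0:Fin 2) := by decide
  have e3 : (finSumFinEquiv : Fin 2 ⊕ Fin 2 ≃ Fin 4).symm (3 : Fin 4) = Sum.inr (1:Fin 2) := by decide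
  -- the value of S
  have hSv : S = !![0,0,-1,0; 0,0,0,0; 1,0,0,0; 0,0,0,0] := by
    subst hA hB hS
    ext i j
    fin_cases i <;> fin_cases j <;>
      simp [e0, e1, e2, e3, Matrix.submatrix_apply, Matrix.fromBlocks,
        Matrix.vecHead, Matrix.vecTail]
  -- the value of the projection matrix
  have hJ : ((Matrix.fromRows 1 0 : Matrix (Fin 2 ⊕ Fin 2) (Fin 2) ℝ).submatrix
      finSumFinEquiv.symm id) = !![1,0; 0,1; 0,0; 0,0] := by
    ext i j
    fin_cases i <;> fin_cases j <;>
      simp [e0, e1, e2, e3, Matrix.submatrix_apply, Matrix.fromRows_apply_inl, Matrix.fromRows_apply_inr,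
        Matrix.one_apply, Matrix.vecHead, Matrix.vecTail]
  -- derivative of γ
  have hγf : γ = fun t => !![Real.cos t, 0; 0, 1; Real.sin t, 0; 0, 0] := funext hγ
  have hder : ∀ t : ℝ, HasDerivAt γ (!![-Real.sin t, 0; 0, 0; Real.cos t, 0; 0, 0]) t := by
    intro t
    have h : γ = fun t => Real.cos t • (!![1,0;0,0;0,0;0,0] : Matrix (Fin 4) (Fin 2) ℝ)
        + Real.sin t • !![0,0;0,0;1,0;0,0] + !![0,0;0,1;0,0;0,0] := by
      rw [hγf]; funext t; ext i j
      fin_cases i <;> fin_cases j <;> simp [Matrix.vecHead, Matrix.vecTail]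
    rw [h]
    have := (((Real.hasDerivAt_cos t).smul_const (!![(1:ℝ),0;0,0;0,0;0,0])).add
      ((Real.hasDerivAt_sin t).smul_const (!![(0:ℝ),0;0,0;1,0;0,0]))).add_const
      (!![(0:ℝ),0;0,1;0,0;0,0])
    refine this.congr_deriv ?_
    ext i j
    fin_cases i <;> fin_cases j <;> simp [Matrix.vecHead, Matrix.vecTail]
  have hnorm : ∀ t : ℝ, ‖deriv γ t‖ = 1 := by
    intro t
    rw [show deriv γ t = _ from (hder t).deriv, Matrix.frobenius_norm_def]
    have h : ∑ i, ∑ j, ‖(!![-Real.sin t, 0; 0, 0; Real.cos t, 0; 0, 0] :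
        Matrix (Fin 4) (Fin 2) ℝ) i j‖ ^ (2:ℝ) = 1 := by
      simp [Fin.sum_univ_succ, Matrix.vecHead, Matrix.vecTail]
    rw [h]; simp
  -- the exponential
  have hcomm : ∀ t : ℝ, Commute (t • S) S := fun t => (Commute.refl S).smul_left t
  have hexp : ∀ t : ℝ, NormedSpace.exp (t • S) = StGG t := by
    have key : ∀ t : ℝ, NormedSpace.exp ((-t) • S) * StGG t = 1 := by
      have hdz : ∀ t : ℝ, HasDerivAt (fun u => NormedSpace.exp ((-u) • S) * StGG u) 0 t := by
        intro t
        have h1 : HasDerivAt (fun u : ℝ => NormedSpace.exp ((-u) • S))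
            (-(S * NormedSpace.exp ((-t) • S))) t := by
          have := (hasDerivAt_exp_smul_const' (𝕂 := ℝ) S (-t)).scomp t
            (hasDerivAt_neg t)
          simp only [Function.comp_def, neg_smul, one_smul] at this ⊢
          exact this
        have h2 := (StGG_deriv t)
        have h3 := h1.mul h2
        have hc : NormedSpace.exp ((-t) • S) * S = S * NormedSpace.exp ((-t) • S) :=
          (hcomm (-t)).exp_left
        have : -(S * NormedSpace.exp ((-t) • S)) * StGG t
            + NormedSpace.exp ((-t) • S)
              * !![-Real.sin t, 0, -Real.cos t, 0; 0, 0, 0, 0;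
                   Real.cos t, 0, -Real.sin t, 0; 0, 0, 0, 0] = 0 := by
          rw [← S_StGG t, ← hSv, ← Matrix.mul_assoc, hc, neg_mul, neg_add_cancel]
        rwa [this] at h3
      intro t
      have hconst : ∀ t : ℝ, (fun u => NormedSpace.exp ((-u) • S) * StGG u) t
          = (fun u => NormedSpace.exp ((-u) • S) * StGG u) 0 :=
        fun t => is_const_of_deriv_eq_zero
          (fun u => (hdz u).differentiableAt) (fun u => (hdz u).deriv) t 0
      have := hconst t
      simpa [StGG_zero, NormedSpace.exp_zero] using this
    intro t
    have h1 := key t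
    have h2 : NormedSpace.exp (t • S) * NormedSpace.exp ((-t) • S) = 1 := by
      erw [← NormedSpace.exp_add_of_commute (((Commute.refl S).smul_left t).smul_right (-t))]
      rw [show t • S + (-t) • S = 0 by module, NormedSpace.exp_zero]
    calc NormedSpace.exp (t • S)
        = NormedSpace.exp (t • S) * (NormedSpace.exp ((-t) • S) * StGG t) := by
          rw [h1, mul_one]
      _ = (NormedSpace.exp (t • S) * NormedSpace.exp ((-t) • S)) * StGG t := by
          rw [Matrix.mul_assoc]
      _ = StGG t := by rw [h2, one_mul]
  refine ⟨?_, ?_, ?_, ?_, hnorm, ?_, ?_⟩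
  · intro t
    rw [hγ t]
    ext i j
    fin_cases i <;> fin_cases j <;>
      simp [Matrix.mul_apply, Fin.sum_univ_succ, Matrix.one_apply,
        Matrix.vecHead, Matrix.vecTail] <;> nlinarith [Real.sin_sq_add_cos_sq t]
  · intro t; rw [hγ, hγ, Real.cos_add_two_pi, Real.sin_add_two_pi]
  · rw [hγ, hγ]; norm_num
  · rw [hγ]; norm_num
  · simp only [hnorm]
    simp [Real.pi_pos.le]
  · intro t
    rw [hexp, hJ, hA]
    have : (-t) • (0 : Matrix (Fin 2) (Fin 2) ℝ) = 0 := smul_zero _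
    rw [this, NormedSpace.exp_zero, Matrix.mul_one, hγ]
    ext i j
    fin_cases i <;> fin_cases j <;>
      simp [StGG, Matrix.mul_apply, Fin.sum_univ_succ, Matrix.vecHead, Matrix.vecTail]
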